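/- Let X be a set, F(X) the free group on X, ℚ[F(X)] its group algebra over ℚ, and I ⊂ ℚ[F(X)] the augmentation ideal (the kernel of the algebra homomorphism ℚ[F(X)] → ℚ sending every group element to 1). Then the associated graded algebra ⊕_{n ≥ 0} I^n/I^{n+1} of the I-adic filtration is isomorphic, as a graded ℚ-algebra, to the tensor algebra T(V) of the free ℚ-vector space V on the set X, via the isomorphism sending, for each x ∈ X, the class of x − 1 in I/I² to the degree-one generator x ∈ V. -/

import Mathlib

set_option maxHeartbeats 1000000
set_option synthInstance.maxHeartbeats 400000


/-!
STATEMENT 17. Let `X` be a set, `F(X)` the free group on `X`, `ℚ[F(X)]` its group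
algebra and `I` the augmentation ideal. Then the associated graded algebra
`⊕_{n ≥ 0} Iⁿ/Iⁿ⁺¹` is isomorphic, as a graded ℚ-algebra, to the tensor algebra `T(V)`
of the free ℚ-vector space `V` on `X`, via the isomorphism sending the class of `x − 1`
in `I/I²` to the degree-one generator `x ∈ V`.
-/

/-- The augmentation ideal of the group algebra `ℚ[F(X)]` (the kernel of the algebra
homomorphism sending every group element to `1`), viewed as a ℚ-submodule. -/
noncomputable def augIdeal (X : Type*) : Submodule ℚ (MonoidAlgebra ℚ (FreeGroup X)) :=
  Submodule.restrictScalars ℚ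
    (RingHom.ker ((MonoidAlgebra.lift ℚ ℚ (FreeGroup X)) 1).toRingHom)

/-- `Iⁿ`, the `n`-th power of the augmentation ideal. -/
noncomputable def Ipow (X : Type*) (n : ℕ) :
    Submodule ℚ (MonoidAlgebra ℚ (FreeGroup X)) :=
  augIdeal X ^ n

/-- The `n`-th piece `Iⁿ/Iⁿ⁺¹` of the associated graded of the `I`-adic filtration. -/
noncomputable abbrev grPiece (X : Type*) (n : ℕ) :=
  (Ipow X n) ⧸ (Submodule.comap (Ipow X n).subtype (Ipow X (n + 1)))

/-- The canonical projection `Iⁿ → Iⁿ/Iⁿ⁺¹`. -/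
noncomputable def mkg (X : Type*) (n : ℕ) (x : Ipow X n) : grPiece X n :=
  Submodule.Quotient.mk x

/-- The degree-`n` graded piece of the tensor algebra `T(V)`, `V` the free ℚ-vector
space on `X`. -/
noncomputable def taPiece (X : Type*) (n : ℕ) :
    Submodule ℚ (TensorAlgebra ℚ (X →₀ ℚ)) :=
  LinearMap.range (TensorAlgebra.ι ℚ (M := X →₀ ℚ)) ^ n

namespace AG17
variable {X : Type*}

abbrev A (X : Type*) := MonoidAlgebra ℚ (FreeGroup X)
abbrev T (X : Type*) := TensorAlgebra ℚ (X →₀ ℚ)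

/-- augmentation -/
noncomputable def ε (X : Type*) : A X →ₐ[ℚ] ℚ := (MonoidAlgebra.lift ℚ ℚ (FreeGroup X)) 1

noncomputable def ofg (g : FreeGroup X) : A X := MonoidAlgebra.of ℚ (FreeGroup X) g

lemma ε_ofg (g : FreeGroup X) : ε X (ofg g) = 1 := by
  simp [ε, ofg]

lemma mem_augIdeal_iff (a : A X) : a ∈ augIdeal X ↔ ε X a = 0 := by
  rfl

lemma ofg_sub_one_mem (g : FreeGroup X) : ofg g - 1 ∈ augIdeal X := by
  rw [mem_augIdeal_iff, map_sub, ε_ofg, map_one, sub_self]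

/-- the augmentation ideal is spanned by the `g - 1`. -/
noncomputable def θ (X : Type*) : A X →ₗ[ℚ] A X :=
  (LinearMap.id : A X →ₗ[ℚ] A X) - ((Algebra.linearMap ℚ (A X)).comp (ε X).toLinearMap)

lemma augIdeal_le_span :
    augIdeal X ≤ Submodule.span ℚ (Set.range fun g : FreeGroup X => ofg g - 1) := by
  intro a ha
  rw [mem_augIdeal_iff] at ha
  have h1 : a = θ X a := by
    simp [θ, ha]
  rw [h1]
  have h2 : a ∈ (⊤ : Submodule ℚ (A X)) := trivial
  rw [← (MonoidAlgebra.basis (FreeGroup X) ℚ).span_eq] at h2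
  refine Submodule.span_induction ?_ ?_ ?_ ?_ h2
  · rintro x ⟨g, rfl⟩
    apply Submodule.subset_span
    refine ⟨g, ?_⟩
    simp only [θ, Finsupp.coe_basisSingleOne, LinearMap.sub_apply, LinearMap.id_apply,
      LinearMap.coe_comp, Function.comp_apply, AlgHom.toLinearMap_apply]
    have h3 : ε X (MonoidAlgebra.basis (FreeGroup X) ℚ g) = 1 := ε_ofg g
    rw [h3]
    simp [ofg, MonoidAlgebra.of_apply, Algebra.linearMap_apply, Algebra.algebraMap_eq_smul_one]
  · simp
  · intro x y _ _ hx hy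
    rw [map_add]; exact add_mem hx hy
  · intro c x _ hx
    rw [map_smul]; exact Submodule.smul_mem _ _ hx


noncomputable def P : List X → A X
  | [] => 1
  | x :: w => (ofg (FreeGroup.of x) - 1) * P w

lemma P_mem (w : List X) : P w ∈ Ipow X w.length := by
  induction w with
  | nil =>
    show (1 : A X) ∈ augIdeal X ^ 0
    exact (pow_zero (augIdeal X)).symm ▸ Submodule.one_le.mp le_rfl
  | cons x w ih =>
    show (ofg (FreeGroup.of x) - 1) * P w ∈ augIdeal X ^ (w.length + 1)
    rw [pow_succ']
    exact Submodule.mul_mem_mul (ofg_sub_one_mem _) ih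

/-- span of the degree-n generator products -/
noncomputable def SpP (X : Type*) (n : ℕ) : Submodule ℚ (A X) :=
  Submodule.span ℚ (Set.range fun w : {w : List X // w.length = n} => P w.1)

lemma SpP_le (n : ℕ) : SpP X n ≤ Ipow X n := by
  rw [SpP, Submodule.span_le]
  rintro _ ⟨w, rfl⟩
  simpa [w.2] using P_mem (X := X) w.1

lemma ofg_mul_sub (g h : FreeGroup X) :
    ofg (g * h) - 1 = (ofg g - 1) + (ofg h - 1) + (ofg g - 1) * (ofg h - 1) := by
  have : ofg (g * h) = ofg g * ofg h := by simp [ofg]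
  rw [this]; noncomm_ring

lemma reduce_one (g : FreeGroup X) :
    ofg g - 1 ∈ SpP X 1 ⊔ Ipow X 2 := by
  have hmul : ∀ a b : FreeGroup X, ofg a - 1 ∈ SpP X 1 ⊔ Ipow X 2 →
      ofg b - 1 ∈ SpP X 1 ⊔ Ipow X 2 → ofg (a * b) - 1 ∈ SpP X 1 ⊔ Ipow X 2 := by
    intro a b ha hb
    rw [ofg_mul_sub]
    have h2 : (ofg a - 1) * (ofg b - 1) ∈ Ipow X 2 := by
      show _ ∈ augIdeal X ^ 2
      rw [sq]
      exact Submodule.mul_mem_mul (ofg_sub_one_mem _) (ofg_sub_one_mem _)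
    exact add_mem (add_mem ha hb) (Submodule.mem_sup_right h2)
  have hgen : ∀ x : X, ofg (FreeGroup.of x) - 1 ∈ SpP X 1 ⊔ Ipow X 2 := by
    intro x
    apply Submodule.mem_sup_left
    apply Submodule.subset_span
    have hP : P [x] = ofg (FreeGroup.of x) - 1 := by
      show (ofg (FreeGroup.of x) - 1) * P [] = _
      show (ofg (FreeGroup.of x) - 1) * 1 = _
      rw [mul_one]
    exact ⟨⟨[x], rfl⟩, hP⟩
  have hinv : ∀ a : FreeGroup X, ofg a - 1 ∈ SpP X 1 ⊔ Ipow X 2 →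
      ofg a⁻¹ - 1 ∈ SpP X 1 ⊔ Ipow X 2 := by
    intro a ha
    have key : ofg a⁻¹ - 1 = -(ofg a - 1) - (ofg a - 1) * (ofg a⁻¹ - 1) := by
      have h1 : ofg a * ofg a⁻¹ = 1 := by
        rw [show ofg a * ofg a⁻¹ = ofg (a * a⁻¹) by simp [ofg]]
        rw [mul_inv_cancel]
        show MonoidAlgebra.single 1 1 = 1
        exact MonoidAlgebra.one_def.symm
      have h2 : (ofg a - 1) * (ofg a⁻¹ - 1) = 1 - ofg a - ofg a⁻¹ + 1 := by
        rw [sub_mul, mul_sub, h1]; noncomm_ring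
      rw [h2]; noncomm_ring
    rw [key]
    have h2 : (ofg a - 1) * (ofg a⁻¹ - 1) ∈ Ipow X 2 := by
      show _ ∈ augIdeal X ^ 2
      rw [sq]
      exact Submodule.mul_mem_mul (ofg_sub_one_mem _) (ofg_sub_one_mem _)
    exact sub_mem (neg_mem ha) (Submodule.mem_sup_right h2)
  refine FreeGroup.induction_on g ?_ hgen ?_ hmul
  · have h1 : ofg (1 : FreeGroup X) - 1 = 0 := by
      show MonoidAlgebra.single 1 1 - 1 = 0
      rw [← MonoidAlgebra.one_def, sub_self]
    rw [h1]; exact zero_mem _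
  · intro x; exact hinv _

lemma Ipow_le_one : augIdeal X ≤ SpP X 1 ⊔ Ipow X 2 := by
  refine le_trans augIdeal_le_span (Submodule.span_le.mpr ?_)
  rintro _ ⟨g, rfl⟩
  exact reduce_one g

lemma SpP_one_mul (n : ℕ) : SpP X 1 * SpP X n ≤ SpP X (n + 1) := by
  rw [SpP, SpP, Submodule.span_mul_span]
  rw [SpP, Submodule.span_le]
  rintro _ ⟨_, ⟨⟨w1, hw1⟩, rfl⟩, _, ⟨⟨w, hw⟩, rfl⟩, rfl⟩
  apply Submodule.subset_span
  obtain ⟨x, rfl⟩ := List.length_eq_one_iff.mp hw1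
  refine ⟨⟨x :: w, by simp [hw]⟩, ?_⟩
  show P (x :: w) = P [x] * P w
  show (ofg (FreeGroup.of x) - 1) * P w = (ofg (FreeGroup.of x) - 1) * P [] * P w
  show _ = (ofg (FreeGroup.of x) - 1) * 1 * P w
  rw [mul_one]

/-- Key reduction: Iⁿ ≤ span of generator products + Iⁿ⁺¹ -/
lemma Ipow_le (n : ℕ) : Ipow X n ≤ SpP X n ⊔ Ipow X (n + 1) := by
  induction n with
  | zero =>
    intro a ha
    apply Submodule.mem_sup_left
    have h0 : Ipow X 0 = Submodule.span ℚ {(1 : A X)} := by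
      rw [Ipow, pow_zero, Submodule.one_eq_span]
    rw [h0] at ha
    refine Submodule.span_le.mpr ?_ ha
    rintro _ rfl
    exact Submodule.subset_span ⟨⟨[], rfl⟩, rfl⟩
  | succ n ih =>
    have h1 : Ipow X (n+1) = augIdeal X * Ipow X n := by
      rw [Ipow, Ipow, pow_succ']
    calc Ipow X (n+1) = augIdeal X * Ipow X n := h1
      _ ≤ augIdeal X * (SpP X n ⊔ Ipow X (n+1)) := mul_le_mul' le_rfl ih
      _ = augIdeal X * SpP X n ⊔ augIdeal X * Ipow X (n+1) := Submodule.mul_sup _ _ _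
      _ ≤ SpP X (n+1) ⊔ Ipow X (n+2) := ?_
    apply sup_le
    · calc augIdeal X * SpP X n ≤ (SpP X 1 ⊔ Ipow X 2) * SpP X n :=
            mul_le_mul' Ipow_le_one le_rfl
        _ = SpP X 1 * SpP X n ⊔ Ipow X 2 * SpP X n := Submodule.sup_mul _ _ _
        _ ≤ SpP X (n+1) ⊔ Ipow X (n+2) := ?_
      apply sup_le
      · exact le_trans (SpP_one_mul n) le_sup_left
      · refine le_trans ?_ le_sup_right
        calc Ipow X 2 * SpP X n ≤ Ipow X 2 * Ipow X n :=
              mul_le_mul' le_rfl (SpP_le n)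
          _ = Ipow X (n+2) := by rw [Ipow, Ipow, Ipow, ← pow_add, add_comm]
    · refine le_trans ?_ le_sup_right
      show augIdeal X * Ipow X (n+1) ≤ Ipow X (n+2)
      rw [Ipow, Ipow, ← pow_succ']


noncomputable def ιx (x : X) : T X := TensorAlgebra.ι ℚ (Finsupp.single x (1 : ℚ))

noncomputable def tW : List X → T X
  | [] => 1
  | x :: w => ιx x * tW w

lemma tW_mem (w : List X) : tW w ∈ taPiece X w.length := by
  induction w with
  | nil =>
    show (1 : T X) ∈ LinearMap.range (TensorAlgebra.ι ℚ (M := X →₀ ℚ)) ^ 0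
    rw [pow_zero]
    exact Submodule.one_le.mp le_rfl
  | cons x w ih =>
    show ιx x * tW w ∈ LinearMap.range (TensorAlgebra.ι ℚ (M := X →₀ ℚ)) ^ (w.length + 1)
    rw [pow_succ']
    exact Submodule.mul_mem_mul ⟨_, rfl⟩ ih

noncomputable def tfam (X : Type*) (n : ℕ) : {w : List X // w.length = n} → T X :=
  fun w => tW w.1

lemma taPiece_eq_span (n : ℕ) :
    taPiece X n = Submodule.span ℚ (Set.range (tfam X n)) := by
  induction n with
  | zero =>
    apply le_antisymm
    · rw [taPiece, pow_zero, Submodule.one_eq_span]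
      refine Submodule.span_le.mpr ?_
      rintro _ rfl
      exact Submodule.subset_span ⟨⟨[], rfl⟩, rfl⟩
    · rw [Submodule.span_le]
      rintro _ ⟨w, rfl⟩
      simpa [tfam, w.2] using tW_mem (X := X) w.1
  | succ n ih =>
    apply le_antisymm
    · have hJ : LinearMap.range (TensorAlgebra.ι ℚ (M := X →₀ ℚ)) =
          Submodule.span ℚ (Set.range fun x : X => ιx x) := by
        apply le_antisymm
        · rintro _ ⟨v, rfl⟩
          have hv : v ∈ Submodule.span ℚ (Set.range fun x : X => Finsupp.single x (1:ℚ)) := by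
            have := Finsupp.basisSingleOne (R := ℚ) (ι := X) |>.span_eq
            rw [show (Set.range fun x : X => Finsupp.single x (1:ℚ)) =
              Set.range (Finsupp.basisSingleOne (R := ℚ) (ι := X)) by
                simp [Finsupp.coe_basisSingleOne], this]
            trivial
          refine Submodule.span_induction ?_ ?_ ?_ ?_ hv
          · rintro _ ⟨x, rfl⟩
            exact Submodule.subset_span ⟨x, rfl⟩
          · simp
          · intro a b _ _ ha hb
            rw [map_add]; exact add_mem ha hb
          · intro c a _ ha
            rw [map_smul]; exact Submodule.smul_mem _ _ ha
        · rw [Submodule.span_le]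
          rintro _ ⟨x, rfl⟩
          exact ⟨_, rfl⟩
      show taPiece X (n+1) ≤ _
      have h1 : taPiece X (n+1) =
          LinearMap.range (TensorAlgebra.ι ℚ (M := X →₀ ℚ)) * taPiece X n := by
        rw [taPiece, taPiece, pow_succ']
      rw [h1, hJ, ih, Submodule.span_mul_span, Submodule.span_le]
      rintro _ ⟨_, ⟨x, rfl⟩, _, ⟨w, rfl⟩, rfl⟩
      apply Submodule.subset_span
      exact ⟨⟨x :: w.1, by simp [w.2]⟩, rfl⟩
    · rw [Submodule.span_le]
      rintro _ ⟨w, rfl⟩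
      simpa [tfam, w.2] using tW_mem (X := X) w.1

noncomputable def EE (X : Type*) : T X ≃ₐ[ℚ] MonoidAlgebra ℚ (FreeMonoid X) :=
  (TensorAlgebra.equivFreeAlgebra (Finsupp.basisSingleOne (R := ℚ) (ι := X))).trans
    FreeAlgebra.equivMonoidAlgebraFreeMonoid

lemma EE_tW (w : List X) :
    EE X (tW w) = MonoidAlgebra.of ℚ (FreeMonoid X) (FreeMonoid.ofList w) := by
  induction w with
  | nil =>
    show EE X 1 = _
    rw [map_one]
    rfl
  | cons x w ih =>
    show EE X (ιx x * tW w) = _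
    rw [map_mul, ih]
    have h0 : (TensorAlgebra.equivFreeAlgebra (Finsupp.basisSingleOne (R := ℚ) (ι := X)))
        (TensorAlgebra.ι ℚ (Finsupp.single x (1:ℚ))) = FreeAlgebra.ι ℚ x := by
      have h := TensorAlgebra.equivFreeAlgebra_ι_apply
        (Finsupp.basisSingleOne (R := ℚ) (ι := X)) x
      simpa using h
    have h1 : EE X (ιx x) = MonoidAlgebra.of ℚ (FreeMonoid X) (FreeMonoid.of x) := by
      unfold EE ιx
      rw [AlgEquiv.trans_apply, h0]
      simp [FreeAlgebra.equivMonoidAlgebraFreeMonoid]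
    rw [h1, ← map_mul]
    rfl

lemma tfam_li (n : ℕ) : LinearIndependent ℚ (tfam X n) := by
  have hb : LinearIndependent ℚ
      (fun w : {w : List X // w.length = n} =>
        (MonoidAlgebra.basis (FreeMonoid X) ℚ :
          Module.Basis (FreeMonoid X) ℚ (MonoidAlgebra ℚ (FreeMonoid X)))
          (FreeMonoid.ofList w.1)) := by
    apply (MonoidAlgebra.basis (FreeMonoid X) ℚ).linearIndependent.comp
    intro w1 w2 h
    exact Subtype.ext (FreeMonoid.ofList.injective h)
  have h2 := hb.map' (EE X).symm.toLinearEquiv.toLinearMap (EE X).symm.toLinearEquiv.ker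
  have h3 : (fun w : {w : List X // w.length = n} =>
      (EE X).symm ((MonoidAlgebra.basis (FreeMonoid X) ℚ)
        (FreeMonoid.ofList w.1))) = tfam X n := by
    funext w
    have : (MonoidAlgebra.basis (FreeMonoid X) ℚ) (FreeMonoid.ofList w.1)
        = EE X (tW w.1) := by
      rw [EE_tW]; rfl
    rw [this]
    exact (EE X).symm_apply_apply _
  have h2' : LinearIndependent ℚ fun w : {w : List X // w.length = n} =>
      (EE X).symm ((MonoidAlgebra.basis (FreeMonoid X) ℚ)
        (FreeMonoid.ofList w.1)) := h2
  exact h3 ▸ h2'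

/-- basis of the n-th graded piece of T(V) by words of length n -/
noncomputable def BT (X : Type*) (n : ℕ) :
    Module.Basis {w : List X // w.length = n} ℚ (taPiece X n) :=
  (Module.Basis.span (tfam_li (X := X) n)).map
    (LinearEquiv.ofEq _ _ (taPiece_eq_span (X := X) n).symm)

lemma BT_apply (n : ℕ) (w : {w : List X // w.length = n}) :
    (BT X n w : T X) = tW w.1 := by
  simp [BT, Module.Basis.span_apply, tfam]


abbrev R (X : Type*) := PowerSeries (T X)

lemma taPiece_mul_mem {m n : ℕ} {a b : T X} (ha : a ∈ taPiece X m) (hb : b ∈ taPiece X n) :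
    a * b ∈ taPiece X (m + n) := by
  show a * b ∈ LinearMap.range (TensorAlgebra.ι ℚ (M := X →₀ ℚ)) ^ (m + n)
  rw [pow_add]
  exact Submodule.mul_mem_mul ha hb

lemma taPiece_one_mem : (1 : T X) ∈ taPiece X 0 := by
  show (1 : T X) ∈ LinearMap.range (TensorAlgebra.ι ℚ (M := X →₀ ℚ)) ^ 0
  rw [pow_zero]
  exact Submodule.one_le.mp le_rfl

/-- subalgebra of power series whose n-th coefficient is in the n-th graded piece -/
noncomputable def SS (X : Type*) : Subalgebra ℚ (R X) where
  carrier := {f | ∀ n, PowerSeries.coeff n f ∈ taPiece X n}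
  add_mem' := by
    intro a b ha hb n
    rw [map_add]
    exact add_mem (ha n) (hb n)
  mul_mem' := by
    intro a b ha hb n
    rw [PowerSeries.coeff_mul]
    apply Submodule.sum_mem
    rintro ⟨i, j⟩ hij
    rw [Finset.HasAntidiagonal.mem_antidiagonal] at hij
    subst hij
    exact taPiece_mul_mem (ha i) (hb j)
  algebraMap_mem' := by
    intro q n
    have h1 : (algebraMap ℚ (R X)) q = PowerSeries.C (algebraMap ℚ (T X) q) :=
      PowerSeries.algebraMap_apply
    rw [h1, PowerSeries.coeff_C]
    split
    · next h =>
      subst h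
      have : algebraMap ℚ (T X) q = q • (1 : T X) := Algebra.algebraMap_eq_smul_one q
      rw [this]
      exact Submodule.smul_mem _ _ taPiece_one_mem
    · exact zero_mem _

lemma ιx_mem (x : X) : ιx x ∈ taPiece X 1 := by
  show ιx x ∈ LinearMap.range (TensorAlgebra.ι ℚ (M := X →₀ ℚ)) ^ 1
  rw [pow_one]
  exact ⟨_, rfl⟩

/-- the Magnus series 1 + x t -/
noncomputable def mag (x : X) : R X := 1 + PowerSeries.C (ιx x) * PowerSeries.X

/-- its inverse -/
noncomputable def magInv (x : X) : R X := PowerSeries.mk fun n => (-ιx x) ^ n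

lemma coeff_mag (x : X) (n : ℕ) :
    PowerSeries.coeff n (mag x) =
      if n = 0 then 1 else if n = 1 then ιx x else 0 := by
  rw [mag, map_add, PowerSeries.coeff_one, PowerSeries.coeff_C_mul, PowerSeries.coeff_X]
  rcases n with _ | _ | n <;> simp

lemma mag_mul_magInv (x : X) : mag x * magInv x = 1 := by
  ext n
  rw [PowerSeries.coeff_mul]
  rcases n with _ | n
  · simp [coeff_mag, magInv, PowerSeries.coeff_one]
  · rw [Finset.sum_eq_add_of_mem (0, n+1) (1, n) (by simp)
      (by rw [Finset.HasAntidiagonal.mem_antidiagonal]; omega) (by simp) ?_]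
    · simp [coeff_mag, magInv, PowerSeries.coeff_mk, pow_succ']
    · rintro ⟨i, j⟩ hij ⟨hne1, hne2⟩
      rw [Finset.HasAntidiagonal.mem_antidiagonal] at hij
      have hij' : i + j = n + 1 := hij
      have hi : i ≠ 0 := by
        rintro rfl; exact hne1 (by simp only [Prod.mk.injEq]; exact ⟨by first | trivial | omega, by first | trivial | omega⟩)
      have hi1 : i ≠ 1 := by
        rintro rfl; exact hne2 (by simp only [Prod.mk.injEq]; exact ⟨by first | trivial | omega, by first | trivial | omega⟩)
      rw [coeff_mag]
      simp [hi, hi1]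

lemma magInv_mul_mag (x : X) : magInv x * mag x = 1 := by
  ext n
  rw [PowerSeries.coeff_mul]
  rcases n with _ | n
  · simp [coeff_mag, magInv, PowerSeries.coeff_one]
  · rw [Finset.sum_eq_add_of_mem (n+1, 0) (n, 1) (by simp)
      (by rw [Finset.HasAntidiagonal.mem_antidiagonal])
      (by intro h; simp only [Prod.mk.injEq] at h; omega) ?_]
    · simp only [coeff_mag, if_neg (Nat.succ_ne_zero n), magInv, PowerSeries.coeff_mk,
        PowerSeries.coeff_one, if_neg (Nat.succ_ne_zero n)]
      simp [pow_succ]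
    · rintro ⟨i, j⟩ hij ⟨hne1, hne2⟩
      rw [Finset.HasAntidiagonal.mem_antidiagonal] at hij
      have hij' : i + j = n + 1 := hij
      have hj : j ≠ 0 := by
        rintro rfl; exact hne1 (by simp only [Prod.mk.injEq]; exact ⟨by first | trivial | omega, by first | trivial | omega⟩)
      have hj1 : j ≠ 1 := by
        rintro rfl; exact hne2 (by simp only [Prod.mk.injEq]; exact ⟨by first | trivial | omega, by first | trivial | omega⟩)
      rw [coeff_mag]
      simp [hj, hj1]

lemma mag_mem (x : X) : mag x ∈ SS X := by
  intro n
  rw [coeff_mag]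
  rcases n with _ | _ | n
  · simpa using taPiece_one_mem
  · simpa using ιx_mem x
  · simp

lemma magInv_mem (x : X) : magInv x ∈ SS X := by
  intro n
  rw [magInv, PowerSeries.coeff_mk]
  have hpow : (ιx x) ^ n ∈ taPiece X n := by
    show _ ∈ LinearMap.range (TensorAlgebra.ι ℚ (M := X →₀ ℚ)) ^ n
    exact Submodule.pow_mem_pow (LinearMap.range (TensorAlgebra.ι ℚ (M := X →₀ ℚ)))
      (LinearMap.mem_range_self _ _) n
  rw [neg_pow]
  rcases neg_one_pow_eq_or (T X) n with h | h <;> rw [h]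
  · rw [one_mul]; exact hpow
  · rw [neg_one_mul]; exact neg_mem hpow

/-- Magnus unit -/
noncomputable def magU (x : X) : (SS X)ˣ where
  val := ⟨mag x, mag_mem x⟩
  inv := ⟨magInv x, magInv_mem x⟩
  val_inv := Subtype.ext (mag_mul_magInv x)
  inv_val := Subtype.ext (magInv_mul_mag x)

/-- the Magnus homomorphism on the free group -/
noncomputable def magHom (X : Type*) : FreeGroup X →* (SS X)ˣ :=
  FreeGroup.lift fun x => magU x

/-- the Magnus algebra morphism on the group algebra -/
noncomputable def Φ (X : Type*) : A X →ₐ[ℚ] R X :=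
  ((SS X).val.comp (MonoidAlgebra.lift ℚ (SS X) (FreeGroup X)
    ((Units.coeHom (SS X)).comp (magHom X))))

lemma Φ_coeff_mem (a : A X) (n : ℕ) : PowerSeries.coeff n (Φ X a) ∈ taPiece X n := by
  exact ((MonoidAlgebra.lift ℚ (SS X) (FreeGroup X)
    ((Units.coeHom (SS X)).comp (magHom X))) a).2 n

lemma Φ_ofg (g : FreeGroup X) : Φ X (ofg g) = ((magHom X g : SS X) : R X) := by
  simp [Φ, ofg]


lemma magHom_of (x : X) : magHom X (FreeGroup.of x) = magU x := by
  simp [magHom]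

lemma constCoeff_magHom (g : FreeGroup X) :
    PowerSeries.constantCoeff ((magHom X g : SS X) : R X) = 1 := by
  let f : SS X →* T X :=
    ((PowerSeries.constantCoeff).comp (Subalgebra.val (SS X)).toRingHom).toMonoidHom
  let χ : (SS X)ˣ →* (T X)ˣ := Units.map f
  have h : χ.comp (magHom X) = 1 := by
    apply FreeGroup.ext_hom
    intro x
    show χ (magHom X (FreeGroup.of x)) = 1
    rw [magHom_of]
    apply Units.ext
    have h1 : (χ (magU x) : T X) = PowerSeries.constantCoeff (mag x) := rfl
    rw [h1]
    simp [mag]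
  have h2 := congrArg Units.val (DFunLike.congr_fun h g)
  exact h2

lemma coeff_zero_Φ (a : A X) :
    PowerSeries.coeff 0 (Φ X a) = algebraMap ℚ (T X) (ε X a) := by
  have hext : ((PowerSeries.coeff 0).restrictScalars ℚ).comp (Φ X).toLinearMap =
      (Algebra.linearMap ℚ (T X)).comp (ε X).toLinearMap := by
    apply MonoidAlgebra.lhom_ext'
    intro g
    apply LinearMap.ext
    intro c
    show PowerSeries.coeff 0 (Φ X (MonoidAlgebra.single g c)) =
      algebraMap ℚ (T X) (ε X (MonoidAlgebra.single g c))
    have h1 : (MonoidAlgebra.single g c : A X) = algebraMap ℚ (A X) c * ofg g := by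
      rw [← Algebra.smul_def]
      simp [ofg, MonoidAlgebra.of_apply, Finsupp.smul_single]
    have hε : ε X (MonoidAlgebra.single g c) = c := by
      simp [ε]
    rw [hε, h1, map_mul, AlgHom.commutes, PowerSeries.algebraMap_apply,
      PowerSeries.coeff_C_mul, Φ_ofg, PowerSeries.coeff_zero_eq_constantCoeff,
      constCoeff_magHom, mul_one]
  exact DFunLike.congr_fun hext a

lemma coeff_zero_Φ_of_mem {a : A X} (ha : a ∈ augIdeal X) :
    PowerSeries.coeff 0 (Φ X a) = 0 := by
  rw [coeff_zero_Φ]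
  rw [mem_augIdeal_iff] at ha
  rw [ha, map_zero]

/-- coefficients below the adic degree vanish -/
lemma Φ_coeff_eq_zero : ∀ (k : ℕ) (a : A X), a ∈ Ipow X k → ∀ n < k,
    PowerSeries.coeff n (Φ X a) = 0 := by
  intro k
  induction k with
  | zero => intro a _ n hn; omega
  | succ k ih =>
    intro a ha
    have ha' : a ∈ Ipow X k * augIdeal X := by
      rw [Ipow, pow_succ] at ha; exact ha
    refine Submodule.mul_induction_on ha' ?_ ?_
    · intro m hm i hi n hn
      rw [map_mul, PowerSeries.coeff_mul]
      apply Finset.sum_eq_zero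
      rintro ⟨p, q⟩ hpq
      rw [Finset.HasAntidiagonal.mem_antidiagonal] at hpq
      have hpq' : p + q = n := hpq
      by_cases hp : p < k
      · rw [ih m hm p hp, zero_mul]
      · have hq : q = 0 := by omega
        subst hq
        rw [coeff_zero_Φ_of_mem hi, mul_zero]
    · intro b c hb hc n hn
      rw [map_add, map_add, hb n hn, hc n hn, add_zero]

/-- the collapse of the convolution product -/
lemma Φ_coeff_mul {m n : ℕ} {a b : A X} (ha : a ∈ Ipow X m) (hb : b ∈ Ipow X n) :
    PowerSeries.coeff (m + n) (Φ X (a * b)) =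
      PowerSeries.coeff m (Φ X a) * PowerSeries.coeff n (Φ X b) := by
  rw [map_mul, PowerSeries.coeff_mul]
  rw [Finset.sum_eq_single (m, n)]
  · rintro ⟨p, q⟩ hpq hne
    rw [Finset.HasAntidiagonal.mem_antidiagonal] at hpq
    have hpq' : p + q = m + n := hpq
    by_cases hp : p < m
    · rw [Φ_coeff_eq_zero m a ha p hp, zero_mul]
    · have hq : q < n := by
        rcases Nat.lt_or_ge q n with h | h
        · exact h
        · exfalso; apply hne
          have hp' : p = m := by omega
          have hq'' : q = n := by omega
          simp [hp', hq'']
      rw [Φ_coeff_eq_zero n b hb q hq, mul_zero]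
  · intro hmem
    exfalso; apply hmem
    rw [Finset.HasAntidiagonal.mem_antidiagonal]

lemma Φ_gen (x : X) :
    PowerSeries.coeff 1 (Φ X (ofg (FreeGroup.of x) - 1)) = ιx x := by
  rw [map_sub, map_sub, Φ_ofg, magHom_of]
  have h1 : ((magU x : SS X) : R X) = mag x := rfl
  rw [h1, coeff_mag]
  simp

lemma Φ_P (w : List X) :
    PowerSeries.coeff w.length (Φ X (P w)) = tW w := by
  induction w with
  | nil =>
    show PowerSeries.coeff 0 (Φ X 1) = 1
    rw [map_one]
    simp
  | cons x w ih =>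
    show PowerSeries.coeff (w.length + 1) (Φ X ((ofg (FreeGroup.of x) - 1) * P w)) = _
    have hm : (ofg (FreeGroup.of x) - 1) ∈ Ipow X 1 := by
      rw [Ipow, pow_one]; exact ofg_sub_one_mem _
    have hcol := Φ_coeff_mul (X := X) hm (P_mem w)
    rw [add_comm 1 w.length] at hcol
    rw [hcol, Φ_gen, ih]
    rfl


lemma mul_mem_Ipow {m n : ℕ} {a b : A X} (ha : a ∈ Ipow X m) (hb : b ∈ Ipow X n) :
    a * b ∈ Ipow X (m + n) := by
  show a * b ∈ augIdeal X ^ (m + n)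
  rw [pow_add]
  exact Submodule.mul_mem_mul ha hb

lemma P_mem' (n : ℕ) (w : {w : List X // w.length = n}) : P w.1 ∈ Ipow X n := by
  have h := P_mem (X := X) w.1
  rwa [w.2] at h

/-- the forward linear map on the filtration level -/
noncomputable def ebar0 (X : Type*) (n : ℕ) : Ipow X n →ₗ[ℚ] taPiece X n :=
  LinearMap.codRestrict (taPiece X n)
    ((((PowerSeries.coeff n).restrictScalars ℚ).comp (Φ X).toLinearMap).comp
      (Ipow X n).subtype)
    (fun v => Φ_coeff_mem v.1 n)

/-- the forward linear map on the graded level -/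
noncomputable def ebar (X : Type*) (n : ℕ) : grPiece X n →ₗ[ℚ] taPiece X n :=
  Submodule.liftQ _ (ebar0 X n) (by
    intro v hv
    have hv' : v.1 ∈ Ipow X (n + 1) := hv
    have h0 : PowerSeries.coeff n (Φ X v.1) = 0 :=
      Φ_coeff_eq_zero (n+1) v.1 hv' n (Nat.lt_succ_self n)
    show ebar0 X n v = 0
    exact Subtype.ext h0)

lemma ebar_mk (n : ℕ) (v : Ipow X n) :
    (ebar X n (mkg X n v) : T X) = PowerSeries.coeff n (Φ X v.1) := rfl

/-- the inverse linear map -/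
noncomputable def σl (X : Type*) (n : ℕ) : taPiece X n →ₗ[ℚ] grPiece X n :=
  (BT X n).constr ℚ fun w => mkg X n ⟨P w.1, P_mem' n w⟩

lemma ebar_P (n : ℕ) (w : {w : List X // w.length = n}) (h : P w.1 ∈ Ipow X n) :
    ebar X n (mkg X n ⟨P w.1, h⟩) = BT X n w := by
  apply Subtype.ext
  rw [ebar_mk, BT_apply]
  obtain ⟨w, rfl⟩ := w
  exact Φ_P w

lemma ebar_comp_σl (n : ℕ) : (ebar X n).comp (σl X n) = LinearMap.id := by
  apply (BT X n).ext
  intro w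
  rw [LinearMap.comp_apply, σl, Module.Basis.constr_basis, LinearMap.id_apply]
  exact ebar_P n w _

lemma σl_comp_ebar (n : ℕ) : (σl X n).comp (ebar X n) = LinearMap.id := by
  apply LinearMap.ext
  intro u
  obtain ⟨v, rfl⟩ := Submodule.Quotient.mk_surjective _ u
  show σl X n (ebar X n (mkg X n v)) = mkg X n v
  have hv := Ipow_le n v.2
  rw [Submodule.mem_sup] at hv
  obtain ⟨s, hs, r, hr, hsr⟩ := hv
  have hsI : s ∈ Ipow X n := SpP_le n hs
  have hrI : r ∈ Ipow X n := by
    have h1 : r = v.1 - s := by rw [← hsr]; abel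
    rw [h1]; exact sub_mem v.2 hsI
  have hv_split : v = ⟨s, hsI⟩ + ⟨r, hrI⟩ := Subtype.ext (by
    show v.1 = s + r
    rw [hsr])
  have hmk_r : mkg X n ⟨r, hrI⟩ = 0 := by
    rw [mkg, Submodule.Quotient.mk_eq_zero]
    exact hr
  have key : ∀ s', s' ∈ SpP X n → ∃ h2 : s' ∈ Ipow X n,
      σl X n (ebar X n (mkg X n ⟨s', h2⟩)) = mkg X n ⟨s', h2⟩ := by
    intro s' hs'
    refine Submodule.span_induction ?_ ?_ ?_ ?_ hs'
    · rintro _ ⟨w, rfl⟩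
      refine ⟨P_mem' n w, ?_⟩
      rw [ebar_P n w, σl, Module.Basis.constr_basis]
    · exact ⟨zero_mem _, by
        have h0 : (⟨0, zero_mem _⟩ : Ipow X n) = 0 := rfl
        rw [h0, mkg, Submodule.Quotient.mk_zero]
        simp⟩
    · rintro a b _ _ ⟨ha, ea⟩ ⟨hb, eb⟩
      refine ⟨add_mem ha hb, ?_⟩
      have h1 : (⟨a + b, add_mem ha hb⟩ : Ipow X n) = ⟨a, ha⟩ + ⟨b, hb⟩ := rfl
      rw [h1, mkg, Submodule.Quotient.mk_add, map_add, map_add]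
      show σl X n (ebar X n (mkg X n ⟨a, ha⟩)) + σl X n (ebar X n (mkg X n ⟨b, hb⟩)) = _
      rw [ea, eb]
      rfl
    · rintro c a _ ⟨ha, ea⟩
      refine ⟨Submodule.smul_mem _ c ha, ?_⟩
      have h1 : (⟨c • a, Submodule.smul_mem _ c ha⟩ : Ipow X n) = c • ⟨a, ha⟩ := rfl
      rw [h1, mkg, Submodule.Quotient.mk_smul, map_smul, map_smul]
      show c • σl X n (ebar X n (mkg X n ⟨a, ha⟩)) = _
      rw [ea]
      rfl
  obtain ⟨h2, heq⟩ := key s hs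
  rw [hv_split, mkg, Submodule.Quotient.mk_add, map_add, map_add]
  show σl X n (ebar X n (mkg X n ⟨s, hsI⟩)) + σl X n (ebar X n (mkg X n ⟨r, hrI⟩)) =
    mkg X n ⟨s, hsI⟩ + mkg X n ⟨r, hrI⟩
  rw [hmk_r, map_zero, map_zero, add_zero, add_zero]
  exact heq

/-- the graded isomorphism -/
noncomputable def eIso (X : Type*) (n : ℕ) : grPiece X n ≃ₗ[ℚ] taPiece X n :=
  LinearEquiv.ofLinear (ebar X n) (σl X n) (ebar_comp_σl n) (σl_comp_ebar n)

lemma eIso_mk (n : ℕ) (v : Ipow X n) :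
    (eIso X n (mkg X n v) : T X) = PowerSeries.coeff n (Φ X v.1) := rfl


lemma mkg_out {n : ℕ} (u : grPiece X n) : mkg X n (Quotient.out u) = u :=
  Quotient.out_eq u

noncomputable def gm (X : Type*) (m n : ℕ) (u : grPiece X m) (v : grPiece X n) :
    grPiece X (m + n) :=
  mkg X (m+n) ⟨(Quotient.out u).1 * (Quotient.out v).1,
    mul_mem_Ipow (Quotient.out u).2 (Quotient.out v).2⟩

lemma gm_mk (m n : ℕ) (x : Ipow X m) (y : Ipow X n) (h : x.1 * y.1 ∈ Ipow X (m+n)) :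
    gm X m n (mkg X m x) (mkg X n y) = mkg X (m+n) ⟨x.1 * y.1, h⟩ := by
  set x' := Quotient.out (mkg X m x) with hx'def
  set y' := Quotient.out (mkg X n y) with hy'def
  have hx : mkg X m x' = mkg X m x := mkg_out _
  have hy : mkg X n y' = mkg X n y := mkg_out _
  have hxm0 : x' - x ∈ Submodule.comap (Ipow X m).subtype (Ipow X (m+1)) := by
    rw [mkg, mkg] at hx
    exact (Submodule.Quotient.eq _).mp hx
  have hym0 : y' - y ∈ Submodule.comap (Ipow X n).subtype (Ipow X (n+1)) := by
    rw [mkg, mkg] at hy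
    exact (Submodule.Quotient.eq _).mp hy
  have hxm : x'.1 - x.1 ∈ Ipow X (m+1) := hxm0
  have hym : y'.1 - y.1 ∈ Ipow X (n+1) := hym0
  show mkg X (m+n) ⟨x'.1 * y'.1, _⟩ = mkg X (m+n) ⟨x.1 * y.1, h⟩
  unfold mkg
  apply (Submodule.Quotient.eq _).mpr
  show x'.1 * y'.1 - x.1 * y.1 ∈ Ipow X (m + n + 1)
  have hkey : x'.1 * y'.1 - x.1 * y.1 = (x'.1 - x.1) * y'.1 + x.1 * (y'.1 - y.1) := by
    noncomm_ring
  rw [hkey]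
  refine add_mem ?_ ?_
  · have h1 := mul_mem_Ipow hxm y'.2
    have h2 : m + 1 + n = m + n + 1 := by omega
    rwa [h2] at h1
  · have h1 := mul_mem_Ipow x.2 hym
    have h2 : m + (n + 1) = m + n + 1 := by omega
    rwa [h2] at h1

end AG17

theorem associatedGraded_groupAlgebra_freeGroup_iso_tensorAlgebra (X : Type*) :
    -- the (well-defined) multiplication of the associated graded algebra …
    ∃ gmul : ∀ m n : ℕ, grPiece X m → grPiece X n → grPiece X (m + n),
      (∀ (m n : ℕ) (x : Ipow X m) (y : Ipow X n),
        gmul m n (mkg X m x) (mkg X n y) =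
          mkg X (m + n) ⟨x.1 * y.1, by
            have hx : x.1 ∈ augIdeal X ^ m := x.2
            have hy : y.1 ∈ augIdeal X ^ n := y.2
            show x.1 * y.1 ∈ augIdeal X ^ (m + n)
            exact (pow_add (augIdeal X) m n).symm ▸ Submodule.mul_mem_mul hx hy⟩) ∧
      -- … corresponds under ℚ-linear equivalences `eₙ : Iⁿ/Iⁿ⁺¹ ≃ T(V)ₙ` …
      ∃ e : ∀ n : ℕ, grPiece X n ≃ₗ[ℚ] taPiece X n,
        -- … to the multiplication of the tensor algebra (a graded algebra isomorphism),
        (∀ (m n : ℕ) (u : grPiece X m) (v : grPiece X n),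
          ((e (m + n)) (gmul m n u v) : TensorAlgebra ℚ (X →₀ ℚ)) =
            ((e m) u : TensorAlgebra ℚ (X →₀ ℚ)) * ((e n) v : TensorAlgebra ℚ (X →₀ ℚ))) ∧
        -- which is unital,
        (((e 0) (mkg X 0 ⟨1, by
            show (1 : MonoidAlgebra ℚ (FreeGroup X)) ∈ augIdeal X ^ 0
            exact (pow_zero (augIdeal X)).symm ▸ Submodule.one_le.mp le_rfl⟩) :
          TensorAlgebra ℚ (X →₀ ℚ)) = 1) ∧
        -- and sends the class of `x − 1` in `I/I²` to the degree-one generator `x ∈ V`.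
        (∀ x : X,
          ((e 1) (mkg X 1 ⟨MonoidAlgebra.of ℚ (FreeGroup X) (FreeGroup.of x) - 1, by
              show _ ∈ augIdeal X ^ 1
              refine (pow_one (augIdeal X)).symm ▸ ?_
              show _ ∈ RingHom.ker ((MonoidAlgebra.lift ℚ ℚ (FreeGroup X)) 1).toRingHom
              rw [RingHom.mem_ker]
              simp⟩) : TensorAlgebra ℚ (X →₀ ℚ)) =
            TensorAlgebra.ι ℚ (Finsupp.single x (1 : ℚ))) := by
  refine ⟨AG17.gm X, fun m n x y => AG17.gm_mk m n x y _, AG17.eIso X, ?_, ?_, ?_⟩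
  · intro m n u v
    have hu := AG17.mkg_out u
    have hv := AG17.mkg_out v
    rw [← hu, ← hv,
      AG17.gm_mk m n _ _ (AG17.mul_mem_Ipow (Quotient.out u).2 (Quotient.out v).2)]
    rw [AG17.eIso_mk, AG17.eIso_mk, AG17.eIso_mk]
    exact AG17.Φ_coeff_mul (Quotient.out u).2 (Quotient.out v).2
  · rw [AG17.eIso_mk]
    rw [map_one]
    simp
  · intro x
    rw [AG17.eIso_mk]
    exact AG17.Φ_gen x
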